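/- Fix integers k ≥ 0, j ≥ 0 and i ≥ 1, and assume either i ≤ j or i ≤ k+j−2. Let B_i be the following set of 3k+5j+4+i distinct lines of the real projective plane: the line z = 0; the lines x = s·z and y = s·z for each integer −j ≤ s ≤ k+j; and the lines x + y = c·z for each integer −j ≤ c ≤ k+i. Let H be the line x + y = (k+i)·z, which belongs to B_i. Then the set of intersection points {H ∩ K : K ∈ B_i, K ≠ H} has exactly k+2j+2+i elements. (Equivalently, the number of triple points satisfies t_{B_i, H} = 2k+3j+1.) -/

import Mathlib

noncomputable section

/-- The projective line `{a·x + b·y + c·z = 0}` regarded as the 2-dimensional subspace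
of `ℝ³` cut out by the linear form with coefficients `a, b, c`. -/
def lineL (a b c : ℝ) : Submodule ℝ (Fin 3 → ℝ) :=
  LinearMap.ker
    ((a • LinearMap.proj 0 + b • LinearMap.proj 1 + c • LinearMap.proj 2 :
      (Fin 3 → ℝ) →ₗ[ℝ] ℝ))

/-- The grid arrangement: the line at infinity `z = 0` together with the lines
`x = s·z` and `y = s·z` for integers `-j ≤ s ≤ k+j`. -/
def gridLines (k j : ℕ) : Set (Submodule ℝ (Fin 3 → ℝ)) :=
  {lineL 0 0 1} ∪
    {L | ∃ s : ℤ, -(j : ℤ) ≤ s ∧ s ≤ (k : ℤ) + j ∧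
      (L = lineL 1 0 (-(s : ℝ)) ∨ L = lineL 0 1 (-(s : ℝ)))}

lemma mem_lineL {a b c : ℝ} {v : Fin 3 → ℝ} :
    v ∈ lineL a b c ↔ a * v 0 + b * v 1 + c * v 2 = 0 := by
  simp [lineL, LinearMap.mem_ker, smul_eq_mul]

lemma lineL_ne {a b c a' b' c' : ℝ} (v : Fin 3 → ℝ)
    (h1 : a * v 0 + b * v 1 + c * v 2 = 0)
    (h2 : a' * v 0 + b' * v 1 + c' * v 2 ≠ 0) :
    lineL a b c ≠ lineL a' b' c' := fun h =>
  h2 (mem_lineL.mp (h ▸ mem_lineL.mpr h1))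

lemma lineLx_inj {s t : ℝ} (h : lineL 1 0 (-s) = lineL 1 0 (-t)) : s = t := by
  by_contra hne
  exact lineL_ne (a := 1) (b := 0) (c := -s) ![s,0,1] (by norm_num [Matrix.cons_val_two])
    (by simp; intro h'; exact hne (by linarith)) h

lemma lineLy_inj {s t : ℝ} (h : lineL 0 1 (-s) = lineL 0 1 (-t)) : s = t := by
  by_contra hne
  exact lineL_ne (a := 0) (b := 1) (c := -s) ![0,s,1] (by norm_num [Matrix.cons_val_two])
    (by simp; intro h'; exact hne (by linarith)) h

lemma lineLd_inj {s t : ℝ} (h : lineL 1 1 (-s) = lineL 1 1 (-t)) : s = t := by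
  by_contra hne
  exact lineL_ne (a := 1) (b := 1) (c := -s) ![s,0,1] (by norm_num [Matrix.cons_val_two])
    (by simp; intro h'; exact hne (by linarith)) h

lemma z_ne_x (s : ℝ) : lineL 0 0 1 ≠ lineL 1 0 (-s) :=
  lineL_ne ![1,0,0] (by norm_num [Matrix.cons_val_two]) (by norm_num [Matrix.cons_val_two])
lemma z_ne_y (s : ℝ) : lineL 0 0 1 ≠ lineL 0 1 (-s) :=
  lineL_ne ![0,1,0] (by norm_num [Matrix.cons_val_two]) (by norm_num [Matrix.cons_val_two])
lemma z_ne_d (s : ℝ) : lineL 0 0 1 ≠ lineL 1 1 (-s) :=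
  lineL_ne ![1,0,0] (by norm_num [Matrix.cons_val_two]) (by norm_num [Matrix.cons_val_two])
lemma x_ne_y (s t : ℝ) : lineL 1 0 (-s) ≠ lineL 0 1 (-t) :=
  lineL_ne ![0,1,0] (by norm_num [Matrix.cons_val_two]) (by norm_num [Matrix.cons_val_two])
lemma x_ne_d (s t : ℝ) : lineL 1 0 (-s) ≠ lineL 1 1 (-t) :=
  lineL_ne ![0,1,0] (by norm_num [Matrix.cons_val_two]) (by norm_num [Matrix.cons_val_two])
lemma y_ne_d (s t : ℝ) : lineL 0 1 (-s) ≠ lineL 1 1 (-t) :=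
  lineL_ne ![1,0,0] (by norm_num [Matrix.cons_val_two]) (by norm_num [Matrix.cons_val_two])

set_option linter.unnecessarySeqFocus false

lemma inf_x (C s : ℝ) : lineL 1 1 (-C) ⊓ lineL 1 0 (-s) = ℝ ∙ ![s, C - s, 1] := by
  apply le_antisymm
  · rintro v hv
    rw [Submodule.mem_inf] at hv
    obtain ⟨h1, h2⟩ := hv
    rw [mem_lineL] at h1 h2
    rw [Submodule.mem_span_singleton]
    refine ⟨v 2, ?_⟩
    funext w
    fin_cases w <;> simp <;> ring_nf <;> nlinarith [h1, h2]
  · rw [Submodule.span_singleton_le_iff_mem, Submodule.mem_inf, mem_lineL, mem_lineL]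
    norm_num [Matrix.cons_val_two]

lemma inf_y (C s : ℝ) : lineL 1 1 (-C) ⊓ lineL 0 1 (-s) = ℝ ∙ ![C - s, s, 1] := by
  apply le_antisymm
  · rintro v hv
    rw [Submodule.mem_inf] at hv
    obtain ⟨h1, h2⟩ := hv
    rw [mem_lineL] at h1 h2
    rw [Submodule.mem_span_singleton]
    refine ⟨v 2, ?_⟩
    funext w
    fin_cases w <;> simp <;> ring_nf <;> nlinarith [h1, h2]
  · rw [Submodule.span_singleton_le_iff_mem, Submodule.mem_inf, mem_lineL, mem_lineL]
    norm_num [Matrix.cons_val_two]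

lemma inf_z (C : ℝ) : lineL 1 1 (-C) ⊓ lineL 0 0 1 = ℝ ∙ ![1, -1, 0] := by
  apply le_antisymm
  · rintro v hv
    rw [Submodule.mem_inf] at hv
    obtain ⟨h1, h2⟩ := hv
    rw [mem_lineL] at h1 h2
    rw [Submodule.mem_span_singleton]
    have hv2 : v 2 = 0 := by linarith
    rw [hv2, mul_zero] at h1
    refine ⟨v 0, ?_⟩
    funext w
    fin_cases w <;> simp [hv2] <;> linarith
  · rw [Submodule.span_singleton_le_iff_mem, Submodule.mem_inf, mem_lineL, mem_lineL]
    norm_num [Matrix.cons_val_two]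

lemma inf_d {C c : ℝ} (h : c ≠ C) : lineL 1 1 (-C) ⊓ lineL 1 1 (-c) = ℝ ∙ ![1, -1, 0] := by
  apply le_antisymm
  · rintro v hv
    rw [Submodule.mem_inf] at hv
    obtain ⟨h1, h2⟩ := hv
    rw [mem_lineL] at h1 h2
    rw [Submodule.mem_span_singleton]
    have hv2 : v 2 = 0 := by
      rcases sub_ne_zero_of_ne h with hne
      have : (c - C) * v 2 = 0 := by linarith
      rcases mul_eq_zero.mp this with h' | h'
      · exact absurd h' hne
      · exact h'
    rw [hv2, mul_zero] at h1
    refine ⟨v 0, ?_⟩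
    funext w
    fin_cases w <;> simp [hv2] <;> linarith
  · rw [Submodule.span_singleton_le_iff_mem, Submodule.mem_inf, mem_lineL, mem_lineL]
    norm_num [Matrix.cons_val_two]

lemma span_pt_inj {a b a' b' : ℝ}
    (h : (ℝ ∙ ![a, b, (1:ℝ)]) = ℝ ∙ ![a', b', (1:ℝ)]) : a = a' := by
  have : ![a,b,(1:ℝ)] ∈ (ℝ ∙ ![a', b', (1:ℝ)]) := h ▸ Submodule.mem_span_singleton_self _
  rw [Submodule.mem_span_singleton] at this
  obtain ⟨t, ht⟩ := this
  have h2 := congrFun ht 2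
  have h0 := congrFun ht 0
  simp at h2 h0
  rw [h2] at h0; linarith

lemma span_inf_ne (a b : ℝ) : (ℝ ∙ ![(1:ℝ), -1, 0]) ≠ ℝ ∙ ![a, b, (1:ℝ)] := by
  intro h
  have : ![a,b,(1:ℝ)] ∈ (ℝ ∙ ![(1:ℝ), -1, 0]) := h ▸ Submodule.mem_span_singleton_self _
  rw [Submodule.mem_span_singleton] at this
  obtain ⟨t, ht⟩ := this
  have h2 := congrFun ht 2
  simp at h2

lemma ncard_image_Icc {α : Type*} {f : ℤ → α} (hf : Function.Injective f) (a b : ℤ) :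
    (f '' Set.Icc a b).ncard = (b + 1 - a).toNat := by
  rw [Set.ncard_image_of_injective _ hf, ← Finset.coe_Icc, Set.ncard_coe_finset, Int.card_Icc]

lemma finite_image_Icc {α : Type*} (f : ℤ → α) (a b : ℤ) :
    (f '' Set.Icc a b).Finite := by
  rw [← Finset.coe_Icc]
  exact (Finset.Icc a b).finite_toSet.image f

/-- For the arrangement `B_i = grid ∪ {x+y = c·z, -j ≤ c ≤ k+i}` and its member
`H : x + y = (k+i)·z`, the set of intersection points of `H` with the other lines has
`k+2j+2+i` elements, i.e. `t_{B_i, H} = 2k+3j+1`. -/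
theorem outer_diagonal_intersections (k j i : ℕ) (hi1 : 1 ≤ i)
    (hi2 : i ≤ j ∨ i + 2 ≤ k + j) :
    let Bi : Set (Submodule ℝ (Fin 3 → ℝ)) :=
      gridLines k j ∪
        {L | ∃ c : ℤ, -(j : ℤ) ≤ c ∧ c ≤ (k : ℤ) + i ∧ L = lineL 1 1 (-(c : ℝ))}
    let H := lineL 1 1 (-((k : ℝ) + (i : ℝ)))
    Bi.ncard = 3 * k + 5 * j + 4 + i ∧
    H ∈ Bi ∧
    ((fun K => H ⊓ K) '' (Bi \ {H})).ncard = k + 2 * j + 2 + i := by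
  intro Bi H
  set C : ℝ := (k : ℝ) + (i : ℝ) with hC
  set fx : ℤ → Submodule ℝ (Fin 3 → ℝ) := fun s => lineL 1 0 (-(s : ℝ)) with hfx
  set fy : ℤ → Submodule ℝ (Fin 3 → ℝ) := fun s => lineL 0 1 (-(s : ℝ)) with hfy
  set fd : ℤ → Submodule ℝ (Fin 3 → ℝ) := fun c => lineL 1 1 (-(c : ℝ)) with hfd
  have hfx_inj : Function.Injective fx := fun s t h => by
    have := lineLx_inj h; exact_mod_cast this
  have hfy_inj : Function.Injective fy := fun s t h => by
    have := lineLy_inj h; exact_mod_cast this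
  have hfd_inj : Function.Injective fd := fun s t h => by
    have := lineLd_inj h; exact_mod_cast this
  have hBi : Bi = ({lineL 0 0 1} ∪ (fx '' Set.Icc (-(j:ℤ)) ((k:ℤ)+j)
      ∪ fy '' Set.Icc (-(j:ℤ)) ((k:ℤ)+j))) ∪ fd '' Set.Icc (-(j:ℤ)) ((k:ℤ)+i) := by
    show gridLines k j ∪ _ = _
    unfold gridLines
    ext L
    simp only [Set.mem_union, Set.mem_singleton_iff, Set.mem_setOf_eq, Set.mem_image,
      Set.mem_Icc, hfx, hfy, hfd]
    constructor
    · rintro ((h | ⟨s, h1, h2, (h3 | h3)⟩) | ⟨c, h1, h2, h3⟩)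
      · exact Or.inl (Or.inl h)
      · exact Or.inl (Or.inr (Or.inl ⟨s, ⟨h1, h2⟩, h3.symm⟩))
      · exact Or.inl (Or.inr (Or.inr ⟨s, ⟨h1, h2⟩, h3.symm⟩))
      · exact Or.inr ⟨c, ⟨h1, h2⟩, h3.symm⟩
    · rintro ((h | (⟨s, ⟨h1, h2⟩, h3⟩ | ⟨s, ⟨h1, h2⟩, h3⟩)) | ⟨c, ⟨h1, h2⟩, h3⟩)
      · exact Or.inl (Or.inl h)
      · exact Or.inl (Or.inr ⟨s, h1, h2, Or.inl h3.symm⟩)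
      · exact Or.inl (Or.inr ⟨s, h1, h2, Or.inr h3.symm⟩)
      · exact Or.inr ⟨c, h1, h2, h3.symm⟩
  -- finiteness
  have finx := finite_image_Icc fx (-(j:ℤ)) ((k:ℤ)+j)
  have finy := finite_image_Icc fy (-(j:ℤ)) ((k:ℤ)+j)
  have find := finite_image_Icc fd (-(j:ℤ)) ((k:ℤ)+i)
  -- disjointness
  have dxy : Disjoint (fx '' Set.Icc (-(j:ℤ)) ((k:ℤ)+j)) (fy '' Set.Icc (-(j:ℤ)) ((k:ℤ)+j)) := by
    rw [Set.disjoint_left]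
    rintro L ⟨s, _, rfl⟩ ⟨t, _, ht⟩
    exact x_ne_y _ _ ht.symm
  have dzxy : Disjoint ({lineL 0 0 1} : Set (Submodule ℝ (Fin 3 → ℝ)))
      (fx '' Set.Icc (-(j:ℤ)) ((k:ℤ)+j) ∪ fy '' Set.Icc (-(j:ℤ)) ((k:ℤ)+j)) := by
    rw [Set.disjoint_left]
    rintro L rfl (⟨s, _, hs⟩ | ⟨s, _, hs⟩)
    · exact z_ne_x _ hs.symm
    · exact z_ne_y _ hs.symm
  have dd : Disjoint ({lineL 0 0 1} ∪ (fx '' Set.Icc (-(j:ℤ)) ((k:ℤ)+j)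
      ∪ fy '' Set.Icc (-(j:ℤ)) ((k:ℤ)+j))) (fd '' Set.Icc (-(j:ℤ)) ((k:ℤ)+i)) := by
    rw [Set.disjoint_left]
    rintro L (rfl | (⟨s, _, rfl⟩ | ⟨s, _, rfl⟩)) ⟨c, _, hc⟩
    · exact z_ne_d _ hc.symm
    · exact x_ne_d _ _ hc.symm
    · exact y_ne_d _ _ hc.symm
  have card1 : Bi.ncard = 3 * k + 5 * j + 4 + i := by
    rw [hBi, Set.ncard_union_eq dd (by
        exact (Set.finite_singleton _).union (finx.union finy)) find,
      Set.ncard_union_eq dzxy (Set.finite_singleton _) (finx.union finy),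
      Set.ncard_union_eq dxy finx finy,
      Set.ncard_singleton, ncard_image_Icc hfx_inj, ncard_image_Icc hfy_inj,
      ncard_image_Icc hfd_inj]
    omega
  have hHmem : H ∈ Bi := by
    refine Or.inr ⟨(k:ℤ) + i, by omega, le_refl _, ?_⟩
    show H = lineL 1 1 (-(((k:ℤ)+i : ℤ) : ℝ))
    have : (((k:ℤ)+i : ℤ) : ℝ) = (k:ℝ) + i := by push_cast; ring
    rw [this]
  refine ⟨card1, hHmem, ?_⟩
  -- the point map
  set P : ℤ → Submodule ℝ (Fin 3 → ℝ) := fun t => ℝ ∙ ![(t:ℝ), C - (t:ℝ), 1] with hP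
  have hP_inj : Function.Injective P := fun s t h => by
    have := span_pt_inj h; exact_mod_cast this
  have hHd : H = lineL 1 1 (-C) := rfl
  have himg : (fun K => H ⊓ K) '' (Bi \ {H})
      = insert (ℝ ∙ ![(1:ℝ), -1, 0]) (P '' Set.Icc (-(j:ℤ)) ((k:ℤ)+i+j)) := by
    ext p
    constructor
    · rintro ⟨K, ⟨hK, hKne⟩, rfl⟩
      beta_reduce
      rw [hBi] at hK
      simp only [Set.mem_singleton_iff] at hKne
      rcases hK with ((rfl | (⟨s, hs, rfl⟩ | ⟨s, hs, rfl⟩)) | ⟨c, hc, rfl⟩)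
      · rw [hHd, inf_z]; exact Set.mem_insert _ _
      · refine Set.mem_insert_of_mem _ ⟨s, ?_, ?_⟩
        · simp only [Set.mem_Icc] at hs ⊢; omega
        · rw [hP]; simp only
          rw [hHd, hfx]; simp only
          rw [inf_x]
      · refine Set.mem_insert_of_mem _ ⟨(k:ℤ) + i - s, ?_, ?_⟩
        · simp only [Set.mem_Icc] at hs ⊢; omega
        · rw [hP]; simp only
          rw [hHd, hfy]; simp only
          rw [inf_y]
          have e1 : (((k:ℤ) + i - s : ℤ) : ℝ) = C - (s:ℝ) := by rw [hC]; push_cast; ring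
          rw [e1, sub_sub_cancel]
      · have hcC : ((c:ℤ):ℝ) ≠ C := by
          intro h
          apply hKne
          rw [hfd]; simp only
          rw [h, hHd]
        rw [hHd, hfd]; simp only
        rw [inf_d hcC]
        exact Set.mem_insert _ _
    · intro hp
      rcases Set.mem_insert_iff.mp hp with rfl | ⟨t, ht, rfl⟩
      · refine ⟨lineL 0 0 1, ⟨?_, ?_⟩, ?_⟩
        · rw [hBi]; exact Or.inl (Or.inl rfl)
        · simp only [Set.mem_singleton_iff]
          exact z_ne_d _
        · beta_reduce
          rw [hHd, inf_z]
      · simp only [Set.mem_Icc] at ht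
        by_cases hcase : t ≤ (k:ℤ) + j
        · refine ⟨fx t, ⟨?_, ?_⟩, ?_⟩
          · rw [hBi]; exact Or.inl (Or.inr (Or.inl ⟨t, Set.mem_Icc.mpr ⟨ht.1, hcase⟩, rfl⟩))
          · simp only [Set.mem_singleton_iff, hfx, hHd]
            exact x_ne_d _ _
          · beta_reduce
            rw [hHd, hfx]; simp only
            rw [inf_x]
        · refine ⟨fy ((k:ℤ) + i - t), ⟨?_, ?_⟩, ?_⟩
          · rw [hBi]
            refine Or.inl (Or.inr (Or.inr ⟨(k:ℤ) + i - t, Set.mem_Icc.mpr ⟨?_, ?_⟩, rfl⟩))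
            · omega
            · omega
          · simp only [Set.mem_singleton_iff, hfy, hHd]
            exact y_ne_d _ _
          · beta_reduce
            rw [hHd, hfy]; simp only
            rw [inf_y]
            have e1 : C - (((k:ℤ) + i - t : ℤ) : ℝ) = (t:ℝ) := by rw [hC]; push_cast; ring
            have e2 : (((k:ℤ) + i - t : ℤ) : ℝ) = C - (t:ℝ) := by rw [hC]; push_cast; ring
            rw [e1, e2]
  rw [himg, Set.ncard_insert_of_notMem (by
      rintro ⟨t, _, hspan⟩
      exact span_inf_ne _ _ hspan.symm) (finite_image_Icc P _ _),
    ncard_image_Icc hP_inj]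
  omega
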